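/- Let G be a connected graph containing a universal vertex and let k be a positive integer. Then G has a connected safe set of size at most k if and only if there exists a set S ⊆ V(G) with |S| ≤ k such that every connected component of G − S has at most k vertices. -/

import Mathlib

namespace VI

open SimpleGraph

variable {V : Type*}

/-- Total weight of a set of vertices. -/
noncomputable def setWeight (w : V → ℕ) (X : Set V) : ℕ := ∑ᶠ v ∈ X, w v

/-- Maximum weight of a connected component of `G − S`. -/
noncomputable def compMax (G : SimpleGraph V) (w : V → ℕ) (S : Set V) : ℕ :=
  sSup {n | ∃ C : (G.induce Sᶜ).ConnectedComponent, n = setWeight w (Subtype.val '' C.supp)}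

/-- `w(S) + max_{C ∈ cc(G−S)} w(V(C))`. -/
noncomputable def viCost (G : SimpleGraph V) (w : V → ℕ) (S : Set V) : ℕ :=
  setWeight w S + compMax G w S

/-- The weighted vertex integrity of `G`. -/
noncomputable def wvi (G : SimpleGraph V) (w : V → ℕ) : ℕ := ⨅ S : Set V, viCost G w S

/-- Maximum number of vertices of a connected component of `G − S`. -/
noncomputable def uCompMax (G : SimpleGraph V) (S : Set V) : ℕ :=
  sSup {n | ∃ C : (G.induce Sᶜ).ConnectedComponent, n = C.supp.ncard}

/-- `|S| + max_{C ∈ cc(G−S)} |V(C)|`. -/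
noncomputable def uViCost (G : SimpleGraph V) (S : Set V) : ℕ := S.ncard + uCompMax G S

/-- The (unweighted) vertex integrity of `G`. -/
noncomputable def uvi (G : SimpleGraph V) : ℕ := ⨅ S : Set V, uViCost G S

/-- A vertex `v` is redundant w.r.t. `S` if at most one connected component of `G − S`
contains a neighbor of `v`. -/
def Redundant (G : SimpleGraph V) (S : Set V) (v : V) : Prop :=
  {C : (G.induce Sᶜ).ConnectedComponent | ∃ u : (Sᶜ : Set V), G.Adj v ↑u ∧ u ∈ C.supp}.Subsingleton

/-- `S` is irredundant if it contains no redundant vertex. -/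
def Irredundant (G : SimpleGraph V) (S : Set V) : Prop := ∀ v ∈ S, ¬ Redundant G S v

end VI

namespace VI

/-- A connected safe set of `G`: `G[S]` is connected and no component of `G − S`
is larger than `S`. -/
def IsConnectedSafeSet {V : Type*} (G : SimpleGraph V) (S : Set V) : Prop :=
  (G.induce S).Connected ∧
    ∀ C : (G.induce Sᶜ).ConnectedComponent, C.supp.ncard ≤ S.ncard

end VI


open SimpleGraph

section Aux

variable {V : Type*}

lemma aux_exists_superset [Fintype V] {S : Set V} {n : ℕ} (h1 : S.ncard ≤ n)
    (h2 : n ≤ Fintype.card V) : ∃ T : Set V, S ⊆ T ∧ T.ncard = n := by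
  classical
  have hcard : S.toFinset.card ≤ n := by rwa [Set.ncard_eq_toFinset_card'] at h1
  obtain ⟨t, hst, ht⟩ := Finset.exists_superset_card_eq hcard h2
  exact ⟨↑t, fun x hx => hst (Set.mem_toFinset.2 hx), by simp [Set.ncard_coe_finset, ht]⟩

lemma aux_conn (G : SimpleGraph V) (u : V) (hu : ∀ v : V, v ≠ u → G.Adj u v)
    {T : Set V} (hT : u ∈ T) : (G.induce T).Connected := by
  have key : ∀ a : T, (G.induce T).Reachable a ⟨u, hT⟩ := by
    intro a
    by_cases h : (a : V) = u
    · exact (Subtype.ext h : a = ⟨u, hT⟩) ▸ Reachable.refl a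
    · exact Adj.reachable ((hu a h).symm)
  haveI : Nonempty T := ⟨⟨u, hT⟩⟩
  exact ⟨fun a b => (key a).trans (key b).symm⟩

lemma aux_comp_le_compl [Fintype V] (G : SimpleGraph V) (T : Set V)
    (C : (G.induce Tᶜ).ConnectedComponent) : C.supp.ncard ≤ Tᶜ.ncard := by
  calc C.supp.ncard ≤ (Set.univ : Set ↥(Tᶜ)).ncard :=
        Set.ncard_le_ncard (Set.subset_univ _) (Set.toFinite _)
    _ = Tᶜ.ncard := by rw [Set.ncard_univ, Nat.card_coe_set_eq]

lemma aux_comp_mono [Fintype V] (G : SimpleGraph V) {S T : Set V} (hST : S ⊆ T)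
    (C : (G.induce Tᶜ).ConnectedComponent) :
    ∃ D : (G.induce Sᶜ).ConnectedComponent, C.supp.ncard ≤ D.supp.ncard := by
  have hcc : Tᶜ ⊆ Sᶜ := Set.compl_subset_compl.2 hST
  let φ : G.induce Tᶜ →g G.induce Sᶜ := ⟨Set.inclusion hcc, fun h => h⟩
  obtain ⟨v, hv⟩ := C.exists_rep
  refine ⟨(G.induce Sᶜ).connectedComponentMk (φ v), ?_⟩
  have himg : Subtype.val '' C.supp ⊆ Subtype.val '' ((G.induce Sᶜ).connectedComponentMk (φ v)).supp := by
    rintro x ⟨w, hw, rfl⟩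
    have hreach : (G.induce Tᶜ).Reachable w v := by
      rw [SimpleGraph.ConnectedComponent.mem_supp_iff, ← hv] at hw
      exact SimpleGraph.ConnectedComponent.exact hw
    refine ⟨φ w, ?_, rfl⟩
    rw [SimpleGraph.ConnectedComponent.mem_supp_iff]
    exact SimpleGraph.ConnectedComponent.sound (hreach.map φ)
  calc C.supp.ncard = (Subtype.val '' C.supp).ncard :=
        (Set.ncard_image_of_injective _ Subtype.val_injective).symm
    _ ≤ (Subtype.val '' ((G.induce Sᶜ).connectedComponentMk (φ v)).supp).ncard :=
        Set.ncard_le_ncard himg (Set.toFinite _)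
    _ = _ := Set.ncard_image_of_injective _ Subtype.val_injective

end Aux


open VI SimpleGraph in
/-- For a connected graph with a universal vertex, having a connected safe set of size at
most `k` is equivalent to having a set `S` of at most `k` vertices all of whose removal
leaves components with at most `k` vertices. -/
theorem statement7 {V : Type*} [Fintype V] (G : SimpleGraph V) (hG : G.Connected)
    (u : V) (hu : ∀ v : V, v ≠ u → G.Adj u v) (k : ℕ) (hk : 0 < k) :
    (∃ S : Set V, IsConnectedSafeSet G S ∧ S.ncard ≤ k) ↔
      (∃ S : Set V, S.ncard ≤ k ∧
        ∀ C : (G.induce Sᶜ).ConnectedComponent, C.supp.ncard ≤ k) := by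
  constructor
  · rintro ⟨S, ⟨hconn, hsafe⟩, hcard⟩
    exact ⟨S, hcard, fun C => (hsafe C).trans hcard⟩
  · rintro ⟨S, hScard, hScomp⟩
    by_cases hbig : Fintype.card V ≤ k
    · refine ⟨Set.univ, ⟨aux_conn G u (fun v hv => hu v hv) (Set.mem_univ u), fun C => ?_⟩, ?_⟩
      · have h0 := aux_comp_le_compl G Set.univ C
        simp only [Set.compl_univ, Set.ncard_empty, Nat.le_zero] at h0
        simp [h0]
      · rw [Set.ncard_univ, Nat.card_eq_fintype_card]; exact hbig
    · push_neg at hbig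
      have hkV : k ≤ Fintype.card V := hbig.le
      by_cases huS : u ∈ S
      · obtain ⟨T, hST, hT⟩ := aux_exists_superset hScard hkV
        refine ⟨T, ⟨aux_conn G u (fun v hv => hu v hv) (hST huS), fun C => ?_⟩, hT.le⟩
        obtain ⟨D, hD⟩ := aux_comp_mono G hST C
        rw [hT]; exact hD.trans (hScomp D)
      · have huSc : u ∈ Sᶜ := huS
        have hsupp : ((G.induce Sᶜ).connectedComponentMk ⟨u, huSc⟩).supp = Set.univ := by
          ext w
          simp only [Set.mem_univ, iff_true, ConnectedComponent.mem_supp_iff]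
          apply ConnectedComponent.sound
          by_cases h : (w : V) = u
          · exact (Subtype.ext h : w = ⟨u, huSc⟩) ▸ Reachable.refl w
          · exact Adj.reachable ((hu w h).symm)
        have hSc : Sᶜ.ncard ≤ k := by
          have := hScomp ((G.induce Sᶜ).connectedComponentMk ⟨u, huSc⟩)
          rwa [hsupp, Set.ncard_univ, Nat.card_coe_set_eq] at this
        obtain ⟨T, hST, hT⟩ :=
          aux_exists_superset (show ({u} : Set V).ncard ≤ k by rw [Set.ncard_singleton]; exact hk) hkV
        refine ⟨T, ⟨aux_conn G u (fun v hv => hu v hv) (hST rfl), fun C => ?_⟩, hT.le⟩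
        have h1 := aux_comp_le_compl G T C
        have h2 : T.ncard + Tᶜ.ncard = Nat.card V := Set.ncard_add_ncard_compl T
        have h3 : S.ncard + Sᶜ.ncard = Nat.card V := Set.ncard_add_ncard_compl S
        rw [hT] at h2 ⊢
        omega
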